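/- Under the same identification, the Chevalley generator F_a of gl_n acts on V^{S_{d̲}} (when d_a ≥ 1) as d_a·Ψ', where Ψ': V^{S_{d̲}} → V^{S_{f̃_a d̲}} is the symmetrization Ψ'(v) = (1/|S_{f̃_a d̲}|) ∑_{w ∈ S_{f̃_a d̲}} w(v). -/

import Mathlib

open Finset

noncomputable section
open scoped Classical

/-- Words of length `d` in the alphabet `{1, …, n}`. -/
abbrev Word (d n : ℕ) := Fin d → Fin n

/-- Extend a tuple `c : Fin n → ℕ` by zero to a function `ℕ → ℕ`. -/
def extf (n : ℕ) (c : Fin n → ℕ) : ℕ → ℕ := fun j => if h : j < n then c ⟨j, h⟩ else 0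

/-- Partial sums of `f : ℕ → ℕ`. -/
def psum (f : ℕ → ℕ) (i : ℕ) : ℕ := ∑ j ∈ Finset.range i, f j

/-- The index of the block (of the composition `f`) containing position `m`. -/
def bIdx (f : ℕ → ℕ) (m : ℕ) : ℕ := sInf {i | m < psum f (i + 1)}

theorem psum_extf (n : ℕ) (c : Fin n → ℕ) : psum (extf n c) n = ∑ i, c i := by
  unfold psum
  rw [← Fin.sum_univ_eq_sum_range]
  refine Finset.sum_congr rfl fun i _ => ?_
  simp [extf, i.isLt]

theorem bIdx_lt (n d : ℕ) (c : Fin n → ℕ) (hc : ∑ i, c i = d) (m : Fin d) :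
    bIdx (extf n c) m < n := by
  rcases n with _ | n
  · exfalso
    have h0 : d = 0 := by simpa using hc.symm
    have := m.2
    omega
  · have hmem : (m : ℕ) < psum (extf (n + 1) c) (n + 1) := by
      rw [psum_extf, hc]; exact m.2
    have := Nat.sInf_le (show n ∈ {i | (m : ℕ) < psum (extf (n + 1) c) (i + 1)} from hmem)
    unfold bIdx
    omega

/-- The canonical (monotone) word `θ_{d̲}` of a composition `d̲ = c` of `d`. -/
def wordOf (n d : ℕ) (c : Fin n → ℕ) (hc : ∑ i, c i = d) : Word d n :=
  fun m => ⟨bIdx (extf n c) m, bIdx_lt n d c hc m⟩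

/-- The Young subgroup `S_{d̲} ⊆ S_d` of a composition `d̲ = c`. -/
def youngC (n d : ℕ) (c : Fin n → ℕ) : Subgroup (Equiv.Perm (Fin d)) where
  carrier := {σ | ∀ m : Fin d, bIdx (extf n c) (σ m) = bIdx (extf n c) m}
  one_mem' := fun _ => rfl
  mul_mem' := by
    intro σ τ hσ hτ m
    simpa [Equiv.Perm.mul_apply, hτ m] using hσ (τ m)
  inv_mem' := by
    intro σ hσ m
    have h := hσ (σ⁻¹ m)
    simpa using h.symm

variable (n d : ℕ) (V : Type) [AddCommGroup V] [Module ℂ V]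
  (ρ : Representation ℂ (Equiv.Perm (Fin d)) V)

/-- A model for `V ⊗ E^{⊗d}`: functions from words to `V`. -/
abbrev TensV := Word d n → V

/-- The image of `v ∈ V^{S_{d̲}}` under the identification
`⊕_{d̲} V^{S_{d̲}} ≅ (V ⊗ E^{⊗d})^{S_d}`, namely `(1/d!) ∑_{x ∈ S_d} x(v) ⊗ x(θ_{d̲})`. -/
def phiFun (c : Fin n → ℕ) (hc : ∑ i, c i = d) (v : V) : TensV n d V :=
  fun w => (Nat.factorial d : ℂ)⁻¹ •
    ∑ x : Equiv.Perm (Fin d), if w ∘ x = wordOf n d c hc then ρ x v else 0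

/-- The Chevalley generator `F_a` of `gl_n` acting on `V ⊗ E^{⊗d}` (by the Leibniz rule on
the tensor factor `E^{⊗d}`, with `F_a θ_{ia} = θ_{ja}`, `ia = a`, `ja = a + 1`). -/
def chevFV (ia ja : Fin n) : TensV n d V →ₗ[ℂ] TensV n d V where
  toFun x := fun w => ∑ k : Fin d, if w k = ja then x (Function.update w k ia) else 0
  map_add' x y := by
    funext w
    show (∑ k : Fin d, _ : V) = (∑ k : Fin d, _ : V) + (∑ k : Fin d, _ : V)
    rw [← Finset.sum_add_distrib]
    refine Finset.sum_congr rfl fun k _ => ?_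
    split <;> simp
  map_smul' c x := by
    funext w
    show (∑ k : Fin d, _ : V) = c • (∑ k : Fin d, _ : V)
    rw [Finset.smul_sum]
    refine Finset.sum_congr rfl fun k _ => ?_
    split <;> simp

/-- The symmetrization operator `Ψ_{d̲', d̲} : V^{S_{d̲}} → V^{S_{d̲'}}`,
`Ψ(v) = (1/|S_{d̲'}|) ∑_{w ∈ S_{d̲'}} w(v)`. -/
def PsiAvg (c' : Fin n → ℕ) (v : V) : V :=
  (Nat.card (youngC n d c') : ℂ)⁻¹ •
    ∑ σ : Equiv.Perm (Fin d), if σ ∈ youngC n d c' then ρ σ v else 0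

/-! ### Auxiliary lemmas -/

lemma psum_mono (f : ℕ → ℕ) {i j : ℕ} (h : i ≤ j) : psum f i ≤ psum f j :=
  Finset.sum_le_sum_of_subset (Finset.range_subset_range.2 h)

lemma psum_succ (f : ℕ → ℕ) (i : ℕ) : psum f (i + 1) = psum f i + f i :=
  Finset.sum_range_succ f i

lemma bIdx_mem (f : ℕ → ℕ) (m i : ℕ) (hi : m < psum f (i + 1)) :
    m < psum f (bIdx f m + 1) :=
  Nat.sInf_mem (⟨i, hi⟩ : Set.Nonempty {j | m < psum f (j + 1)})

lemma bIdx_eq_of (f : ℕ → ℕ) (m i : ℕ) (h1 : psum f i ≤ m) (h2 : m < psum f (i + 1)) :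
    bIdx f m = i := by
  have hne : i ∈ {j | m < psum f (j + 1)} := h2
  refine le_antisymm (Nat.sInf_le hne) ?_
  by_contra h
  push_neg at h
  have hmem : m < psum f (bIdx f m + 1) := bIdx_mem f m i h2
  have hle : psum f (bIdx f m + 1) ≤ psum f i := psum_mono f (by omega)
  omega

lemma bIdx_spec (f : ℕ → ℕ) (m i : ℕ) (hi : m < psum f (i + 1)) :
    psum f (bIdx f m) ≤ m ∧ m < psum f (bIdx f m + 1) := by
  have hmem : m < psum f (bIdx f m + 1) := bIdx_mem f m i hi
  refine ⟨?_, hmem⟩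
  rcases Nat.eq_zero_or_pos (bIdx f m) with h | h
  · simp [h, psum]
  · by_contra hlt
    push_neg at hlt
    have hle : bIdx f m ≤ bIdx f m - 1 := Nat.sInf_le (by
      show m < psum f (bIdx f m - 1 + 1)
      rw [Nat.sub_add_cancel h]
      exact hlt)
    omega

lemma main_aux (n d : ℕ) (V : Type) [AddCommGroup V] [Module ℂ V]
    (ρ : Representation ℂ (Equiv.Perm (Fin d)) V)
    (a : ℕ) (ha : a + 1 < n) (Ia Ja : Fin n) (hIav : (Ia : ℕ) = a) (hJav : (Ja : ℕ) = a + 1)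
    (c : Fin n → ℕ) (hc : ∑ i, c i = d) (h1 : 1 ≤ c Ia)
    (c' : Fin n → ℕ)
    (hc'def : c' = Function.update (Function.update c Ia (c Ia - 1)) Ja (c Ja + 1))
    (hc' : ∑ i, c' i = d)
    (v : V) (hv : ∀ σ ∈ youngC n d c, ρ σ v = v) :
    chevFV n d V Ia Ja (phiFun n d V ρ c hc v) =
      phiFun n d V ρ c' hc' (((c Ia : ℕ) : ℂ) • PsiAvg n d V ρ c' v) := by
  have hIaJa : Ia ≠ Ja := fun h => by have := congrArg Fin.val h; omega
  have hext : ∀ i, extf n c' i + (if i = a then 1 else 0)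
      = extf n c i + (if i = a + 1 then 1 else 0) := by
    intro i
    by_cases hi : i < n
    · subst hc'def
      unfold extf
      rw [dif_pos hi, dif_pos hi]
      by_cases hia : i = a
      · have hEq : (⟨i, hi⟩ : Fin n) = Ia := Fin.ext (show i = (Ia : ℕ) by omega)
        rw [hEq, if_pos hia, if_neg (by omega)]
        rw [Function.update_of_ne hIaJa, Function.update_self]
        omega
      · by_cases hja : i = a + 1
        · have hEq : (⟨i, hi⟩ : Fin n) = Ja := Fin.ext (show i = (Ja : ℕ) by omega)
          rw [hEq, if_neg hia, if_pos hja, Function.update_self]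
        · have hne1 : (⟨i, hi⟩ : Fin n) ≠ Ja := fun h => by
            have := congrArg Fin.val h; simp at this; omega
          have hne2 : (⟨i, hi⟩ : Fin n) ≠ Ia := fun h => by
            have := congrArg Fin.val h; simp at this; omega
          rw [Function.update_of_ne hne1, Function.update_of_ne hne2, if_neg hia, if_neg hja]
    · unfold extf
      rw [dif_neg hi, dif_neg hi, if_neg (by omega), if_neg (by omega)]
  have hkey : ∀ i, psum (extf n c') i + (if i = a + 1 then 1 else 0) = psum (extf n c) i := by
    intro i
    induction i with
    | zero => simp [psum]
    | succ i ih =>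
      rw [psum_succ, psum_succ]
      have h2 := hext i
      have h3 : (i + 1 = a + 1) ↔ (i = a) := by omega
      rw [if_congr h3 rfl rfl]
      split_ifs at h2 ih ⊢ <;> omega
  have hPn : psum (extf n c) n = d := by rw [psum_extf]; exact hc
  have hextA : extf n c a = c Ia := by
    unfold extf
    rw [dif_pos (by omega : a < n)]
    congr 1
    exact Fin.ext (show a = (Ia : ℕ) by omega)
  have hPa1 : psum (extf n c) (a + 1) = psum (extf n c) a + c Ia := by
    rw [psum_succ, hextA]
  have hpd' : psum (extf n c) (a + 1) ≤ d := by
    rw [← hPn]; exact psum_mono _ (by omega)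
  have hpd : psum (extf n c) (a + 1) - 1 < d := by omega
  set pval : ℕ := psum (extf n c) (a + 1) - 1 with hpvaldef
  have hbp : bIdx (extf n c) pval = a := bIdx_eq_of _ _ _ (by omega) (by omega)
  have hbp' : bIdx (extf n c') pval = a + 1 := by
    have hk1 := hkey (a + 1)
    have hk2 := hkey (a + 1 + 1)
    rw [if_pos rfl] at hk1
    rw [if_neg (by omega)] at hk2
    have h5 : psum (extf n c) (a + 1) ≤ psum (extf n c) (a + 1 + 1) := psum_mono _ (by omega)
    exact bIdx_eq_of _ _ _ (by omega) (by omega)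
  have hbm : ∀ m : Fin d, (m : ℕ) ≠ pval →
      bIdx (extf n c') (m : ℕ) = bIdx (extf n c) (m : ℕ) := by
    intro m hm
    have hi : (m : ℕ) < psum (extf n c) (n + 1) :=
      lt_of_lt_of_le (hPn ▸ m.2) (psum_mono _ (Nat.le_succ n))
    obtain ⟨hl, hr⟩ := bIdx_spec (extf n c) m n hi
    apply bIdx_eq_of
    · have hk := hkey (bIdx (extf n c) (m : ℕ))
      split_ifs at hk <;> omega
    · have hk := hkey (bIdx (extf n c) (m : ℕ) + 1)
      by_cases hba : bIdx (extf n c) (m : ℕ) = a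
      · rw [hba] at hk hr ⊢
        split_ifs at hk <;> omega
      · split_ifs at hk <;> omega
  have hθp : wordOf n d c hc ⟨pval, hpd⟩ = Ia :=
    Fin.ext (show bIdx (extf n c) pval = (Ia : ℕ) by omega)
  have hθ' : wordOf n d c' hc' = Function.update (wordOf n d c hc) ⟨pval, hpd⟩ Ja := by
    funext m
    by_cases hm : m = ⟨pval, hpd⟩
    · subst hm
      rw [Function.update_self]
      exact Fin.ext (show bIdx (extf n c') pval = (Ja : ℕ) by omega)
    · rw [Function.update_of_ne hm]
      exact Fin.ext (hbm m (fun h => hm (Fin.ext h)))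
  have hswap : ∀ m : Fin d, wordOf n d c hc m = Ia →
      Equiv.swap m ⟨pval, hpd⟩ ∈ youngC n d c := by
    intro m hm
    have hma : bIdx (extf n c) (m : ℕ) = a := by
      have h6 : bIdx (extf n c) (m : ℕ) = (Ia : ℕ) := congrArg Fin.val hm
      omega
    show ∀ t : Fin d, bIdx (extf n c) ((Equiv.swap m ⟨pval, hpd⟩) t : ℕ)
        = bIdx (extf n c) (t : ℕ)
    intro t
    rcases eq_or_ne t m with h | h
    · subst h
      rw [Equiv.swap_apply_left]
      show bIdx (extf n c) pval = _
      omega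
    · rcases eq_or_ne t ⟨pval, hpd⟩ with h2 | h2
      · subst h2
        rw [Equiv.swap_apply_right]
        show bIdx (extf n c) (m : ℕ) = bIdx (extf n c) pval
        omega
      · rw [Equiv.swap_apply_of_ne_of_ne h h2]
  have hupd : ∀ m : Fin d, wordOf n d c hc m = Ia →
      Function.update (wordOf n d c hc) m Ja
        = (wordOf n d c' hc') ∘ ⇑(Equiv.swap m ⟨pval, hpd⟩) := by
    intro m hm
    rw [hθ']
    funext t
    rcases eq_or_ne t m with h | h
    · subst h
      rw [Function.update_self, Function.comp_apply, Equiv.swap_apply_left,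
        Function.update_self]
    · rcases eq_or_ne t ⟨pval, hpd⟩ with h2 | h2
      · subst h2
        rw [Function.update_of_ne h, Function.comp_apply, Equiv.swap_apply_right,
          Function.update_of_ne (Ne.symm h), hθp, hm]
      · rw [Function.update_of_ne h, Function.comp_apply,
          Equiv.swap_apply_of_ne_of_ne h h2, Function.update_of_ne h2]
  have hstab : ∀ σ ∈ youngC n d c', (wordOf n d c' hc') ∘ ⇑σ = wordOf n d c' hc' := by
    intro σ hσ
    have hσ' : ∀ t : Fin d, bIdx (extf n c') ((σ t : Fin d) : ℕ) = bIdx (extf n c') (t : ℕ) := hσ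
    funext t
    exact Fin.ext (hσ' t)
  have hmemIff : ∀ m : Fin d, wordOf n d c hc m = Ia ↔
      (psum (extf n c) a ≤ (m : ℕ) ∧ (m : ℕ) < psum (extf n c) (a + 1)) := by
    intro m
    constructor
    · intro hm
      have hma : bIdx (extf n c) (m : ℕ) = (Ia : ℕ) := congrArg Fin.val hm
      have hi : (m : ℕ) < psum (extf n c) (n + 1) :=
        lt_of_lt_of_le (hPn ▸ m.2) (psum_mono _ (Nat.le_succ n))
      obtain ⟨hl, hr⟩ := bIdx_spec (extf n c) m n hi
      rw [show bIdx (extf n c) (m : ℕ) = a by omega] at hl hr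
      exact ⟨hl, hr⟩
    · rintro ⟨ha1, ha2⟩
      refine Fin.ext ?_
      show bIdx (extf n c) (m : ℕ) = (Ia : ℕ)
      rw [bIdx_eq_of (extf n c) m a ha1 ha2, hIav]
  have hcard : (Finset.univ.filter fun m : Fin d => wordOf n d c hc m = Ia).card = c Ia := by
    have hcc : (Finset.univ.filter fun m : Fin d => wordOf n d c hc m = Ia).card
        = (Finset.Ico (psum (extf n c) a) (psum (extf n c) (a + 1))).card := by
      refine Finset.card_bij' (fun m _ => (m : ℕ))
        (fun x hx => (⟨x, lt_of_lt_of_le (Finset.mem_Ico.mp hx).2 hpd'⟩ : Fin d)) ?_ ?_ ?_ ?_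
      · intro m hm
        rw [Finset.mem_filter] at hm
        rw [Finset.mem_Ico]
        exact (hmemIff m).1 hm.2
      · intro x hx
        rw [Finset.mem_filter]
        exact ⟨Finset.mem_univ _, (hmemIff _).2 (Finset.mem_Ico.mp hx)⟩
      · intro m hm
        exact Fin.ext rfl
      · intro x hx
        rfl
    rw [hcc, Nat.card_Ico]
    omega
  have hNcard : (Finset.univ.filter fun σ : Equiv.Perm (Fin d) => σ ∈ youngC n d c').card
      = Nat.card (youngC n d c') := by
    rw [Nat.card_eq_fintype_card, Fintype.card_subtype]
  have hN : ((Nat.card (youngC n d c') : ℂ)) ≠ 0 := by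
    exact_mod_cast (Nat.card_pos (α := youngC n d c')).ne'
  funext w
  have hite : ∀ (P : Prop) [Decidable P] (r : ℂ) (u : V),
      (if P then r • u else 0) = r • (if P then u else 0) := by
    intro P _ r u; split <;> simp
  set S : V := ∑ x : Equiv.Perm (Fin d),
    if w ∘ ⇑x = wordOf n d c' hc' then ρ x v else 0 with hS
  have hcond : ∀ (x : Equiv.Perm (Fin d)) (m : Fin d),
      (w (x m) = Ja ∧ Function.update w (x m) Ia ∘ ⇑x = wordOf n d c hc) ↔
      (wordOf n d c hc m = Ia ∧ w ∘ ⇑x = Function.update (wordOf n d c hc) m Ja) := by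
    intro x m
    constructor
    · rintro ⟨hw, hu⟩
      have hθm : wordOf n d c hc m = Ia := by
        have h7 := congrFun hu m
        simp only [Function.comp_apply, Function.update_self] at h7
        exact h7.symm
      refine ⟨hθm, funext fun t => ?_⟩
      rcases eq_or_ne t m with h | h
      · subst h
        rw [Function.comp_apply, hw, Function.update_self]
      · have hxt : x t ≠ x m := fun hcon => h (x.injective hcon)
        have h8 := congrFun hu t
        simp only [Function.comp_apply, Function.update_of_ne hxt] at h8
        rw [Function.comp_apply, h8, Function.update_of_ne h]
    · rintro ⟨hθm, hw⟩
      have hwm : w (x m) = Ja := by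
        have h7 := congrFun hw m
        simp only [Function.comp_apply, Function.update_self] at h7
        exact h7
      refine ⟨hwm, funext fun t => ?_⟩
      rcases eq_or_ne t m with h | h
      · subst h
        rw [Function.comp_apply, Function.update_self, hθm]
      · have hxt : x t ≠ x m := fun hcon => h (x.injective hcon)
        have h8 := congrFun hw t
        simp only [Function.comp_apply, Function.update_of_ne h] at h8
        rw [Function.comp_apply, Function.update_of_ne hxt, h8]
  have hcompτ : ∀ (x : Equiv.Perm (Fin d)) (m : Fin d),
      (w ∘ ⇑x = (wordOf n d c' hc') ∘ ⇑(Equiv.swap m ⟨pval, hpd⟩)) ↔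
      (w ∘ ⇑(x * Equiv.swap m ⟨pval, hpd⟩) = wordOf n d c' hc') := by
    intro x m
    constructor
    · intro h
      funext t
      have h9 := congrFun h ((Equiv.swap m ⟨pval, hpd⟩) t)
      simpa [Equiv.Perm.mul_apply, Equiv.swap_apply_self, Function.comp_apply] using h9
    · intro h
      funext t
      have h9 := congrFun h ((Equiv.swap m ⟨pval, hpd⟩) t)
      simpa [Equiv.Perm.mul_apply, Equiv.swap_apply_self, Function.comp_apply] using h9
  have hcomp : ∀ (x σ : Equiv.Perm (Fin d)), σ ∈ youngC n d c' →
      ((w ∘ ⇑(x * σ) = wordOf n d c' hc') ↔ (w ∘ ⇑x = wordOf n d c' hc')) := by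
    intro x σ hσ
    have hs := hstab σ hσ
    constructor
    · intro h
      funext t
      have h1' := congrFun h (σ⁻¹ t)
      have h2' := congrFun hs (σ⁻¹ t)
      simp only [Function.comp_apply, Equiv.Perm.mul_apply, Equiv.Perm.inv_def, Equiv.apply_symm_apply] at h1' h2'
      rw [Function.comp_apply, h1', ← h2']
    · intro h
      funext t
      have h1' := congrFun h (σ t)
      have h2' := congrFun hs t
      simp only [Function.comp_apply] at h1' h2'
      rw [Function.comp_apply, Equiv.Perm.mul_apply, h1', h2']
  have hA : (∑ k : Fin d, if w k = Ja then
        (∑ x : Equiv.Perm (Fin d),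
          if (Function.update w k Ia) ∘ ⇑x = wordOf n d c hc then ρ x v else 0) else 0)
      = ((c Ia : ℕ) : ℂ) • S := by
    calc (∑ k : Fin d, if w k = Ja then
          (∑ x : Equiv.Perm (Fin d),
            if (Function.update w k Ia) ∘ ⇑x = wordOf n d c hc then ρ x v else 0) else 0)
        = ∑ k : Fin d, ∑ x : Equiv.Perm (Fin d),
            (if w k = Ja ∧ (Function.update w k Ia) ∘ ⇑x = wordOf n d c hc
              then ρ x v else 0) := by
          refine Finset.sum_congr rfl fun k _ => ?_
          by_cases h : w k = Ja
          · rw [if_pos h]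
            exact Finset.sum_congr rfl fun x _ => (if_congr (by simp [h]) rfl rfl)
          · rw [if_neg h]
            exact (Finset.sum_eq_zero fun x _ => if_neg (fun hcon => h hcon.1)).symm
      _ = ∑ x : Equiv.Perm (Fin d), ∑ k : Fin d,
            (if w k = Ja ∧ (Function.update w k Ia) ∘ ⇑x = wordOf n d c hc
              then ρ x v else 0) := Finset.sum_comm
      _ = ∑ x : Equiv.Perm (Fin d), ∑ m : Fin d,
            (if w (x m) = Ja ∧ (Function.update w (x m) Ia) ∘ ⇑x = wordOf n d c hc
              then ρ x v else 0) :=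
          Finset.sum_congr rfl fun x _ => (Equiv.sum_comp x
            (fun k => if w k = Ja ∧ (Function.update w k Ia) ∘ ⇑x = wordOf n d c hc
              then ρ x v else 0)).symm
      _ = ∑ x : Equiv.Perm (Fin d), ∑ m : Fin d,
            (if wordOf n d c hc m = Ia ∧ w ∘ ⇑x = Function.update (wordOf n d c hc) m Ja
              then ρ x v else 0) :=
          Finset.sum_congr rfl fun x _ => Finset.sum_congr rfl fun m _ =>
            if_congr (hcond x m) rfl rfl
      _ = ∑ m : Fin d, ∑ x : Equiv.Perm (Fin d),
            (if wordOf n d c hc m = Ia ∧ w ∘ ⇑x = Function.update (wordOf n d c hc) m Ja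
              then ρ x v else 0) := Finset.sum_comm
      _ = ∑ m : Fin d, (if wordOf n d c hc m = Ia then S else 0) := by
          refine Finset.sum_congr rfl fun m _ => ?_
          by_cases hm : wordOf n d c hc m = Ia
          · rw [if_pos hm]
            have hρτ : ρ (Equiv.swap m ⟨pval, hpd⟩) v = v := hv _ (hswap m hm)
            calc (∑ x : Equiv.Perm (Fin d),
                  if wordOf n d c hc m = Ia ∧ w ∘ ⇑x = Function.update (wordOf n d c hc) m Ja
                    then ρ x v else 0)
                = ∑ x : Equiv.Perm (Fin d),
                    (if w ∘ ⇑(x * Equiv.swap m ⟨pval, hpd⟩) = wordOf n d c' hc'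
                      then ρ (x * Equiv.swap m ⟨pval, hpd⟩) v else 0) := by
                  refine Finset.sum_congr rfl fun x _ => ?_
                  have hcnd : (wordOf n d c hc m = Ia ∧
                        w ∘ ⇑x = Function.update (wordOf n d c hc) m Ja) ↔
                      (w ∘ ⇑(x * Equiv.swap m ⟨pval, hpd⟩) = wordOf n d c' hc') := by
                    rw [and_iff_right hm, hupd m hm]
                    exact hcompτ x m
                  have hval : ρ x v = ρ (x * Equiv.swap m ⟨pval, hpd⟩) v := by
                    rw [map_mul, Module.End.mul_apply, hρτ]
                  exact if_congr hcnd hval rfl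
              _ = S := by
                  rw [hS]
                  exact Equiv.sum_comp (Equiv.mulRight (Equiv.swap m ⟨pval, hpd⟩))
                    (fun y => if w ∘ ⇑y = wordOf n d c' hc' then ρ y v else 0)
          · rw [if_neg hm]
            exact Finset.sum_eq_zero fun x _ => if_neg (fun hcon => hm hcon.1)
      _ = ((c Ia : ℕ) : ℂ) • S := by
          rw [← Finset.sum_filter, Finset.sum_const, hcard]
          exact (Nat.cast_smul_eq_nsmul ℂ _ S).symm
  have hB : (∑ x : Equiv.Perm (Fin d), if w ∘ ⇑x = wordOf n d c' hc' then
        (∑ σ : Equiv.Perm (Fin d), if σ ∈ youngC n d c' then ρ (x * σ) v else 0) else 0)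
      = (Nat.card (youngC n d c')) • S := by
    calc (∑ x : Equiv.Perm (Fin d), if w ∘ ⇑x = wordOf n d c' hc' then
          (∑ σ : Equiv.Perm (Fin d), if σ ∈ youngC n d c' then ρ (x * σ) v else 0) else 0)
        = ∑ x : Equiv.Perm (Fin d), ∑ σ : Equiv.Perm (Fin d),
            (if σ ∈ youngC n d c' ∧ w ∘ ⇑x = wordOf n d c' hc' then ρ (x * σ) v else 0) := by
          refine Finset.sum_congr rfl fun x _ => ?_
          by_cases h : w ∘ ⇑x = wordOf n d c' hc'
          · rw [if_pos h]
            exact Finset.sum_congr rfl fun σ _ => (if_congr (by simp [h]) rfl rfl)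
          · rw [if_neg h]
            exact (Finset.sum_eq_zero fun σ _ => if_neg (fun hcon => h hcon.2)).symm
      _ = ∑ σ : Equiv.Perm (Fin d), ∑ x : Equiv.Perm (Fin d),
            (if σ ∈ youngC n d c' ∧ w ∘ ⇑x = wordOf n d c' hc' then ρ (x * σ) v else 0) :=
          Finset.sum_comm
      _ = ∑ σ : Equiv.Perm (Fin d), (if σ ∈ youngC n d c' then S else 0) := by
          refine Finset.sum_congr rfl fun σ _ => ?_
          by_cases hσ : σ ∈ youngC n d c'
          · rw [if_pos hσ]
            calc (∑ x : Equiv.Perm (Fin d),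
                  if σ ∈ youngC n d c' ∧ w ∘ ⇑x = wordOf n d c' hc' then ρ (x * σ) v else 0)
                = ∑ x : Equiv.Perm (Fin d),
                    (if w ∘ ⇑(x * σ) = wordOf n d c' hc' then ρ (x * σ) v else 0) :=
                  Finset.sum_congr rfl fun x _ =>
                    if_congr (by rw [and_iff_right hσ]; exact (hcomp x σ hσ).symm) rfl rfl
              _ = S := by
                  rw [hS]
                  exact Equiv.sum_comp (Equiv.mulRight σ)
                    (fun y => if w ∘ ⇑y = wordOf n d c' hc' then ρ y v else 0)
          · rw [if_neg hσ]
            exact Finset.sum_eq_zero fun x _ => if_neg (fun hcon => hσ hcon.1)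
      _ = (Nat.card (youngC n d c')) • S := by
          rw [← Finset.sum_filter, Finset.sum_const, hNcard]
  have hρx : ∀ x : Equiv.Perm (Fin d),
      ρ x (((c Ia : ℕ) : ℂ) • PsiAvg n d V ρ c' v)
        = ((c Ia : ℕ) : ℂ) • ((Nat.card (youngC n d c') : ℂ)⁻¹ •
            ∑ σ : Equiv.Perm (Fin d), if σ ∈ youngC n d c' then ρ (x * σ) v else 0) := by
    intro x
    simp only [PsiAvg]
    rw [map_smul, map_smul, map_sum]
    refine congrArg _ (congrArg _ (Finset.sum_congr rfl fun σ _ => ?_))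
    by_cases hσ : σ ∈ youngC n d c'
    · rw [if_pos hσ, if_pos hσ, map_mul, Module.End.mul_apply]
    · rw [if_neg hσ, if_neg hσ, map_zero]
  show (∑ k : Fin d, if w k = Ja then phiFun n d V ρ c hc v (Function.update w k Ia) else 0)
      = phiFun n d V ρ c' hc' (((c Ia : ℕ) : ℂ) • PsiAvg n d V ρ c' v) w
  have hLHS : (∑ k : Fin d, if w k = Ja then
        phiFun n d V ρ c hc v (Function.update w k Ia) else 0)
      = (Nat.factorial d : ℂ)⁻¹ • (((c Ia : ℕ) : ℂ) • S) := by
    rw [← hA, Finset.smul_sum]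
    refine Finset.sum_congr rfl fun k _ => ?_
    rw [← hite]
    rfl
  have hRHS : phiFun n d V ρ c' hc' (((c Ia : ℕ) : ℂ) • PsiAvg n d V ρ c' v) w
      = (Nat.factorial d : ℂ)⁻¹ • (((c Ia : ℕ) : ℂ) • S) := by
    show (Nat.factorial d : ℂ)⁻¹ • (∑ x : Equiv.Perm (Fin d),
        if w ∘ ⇑x = wordOf n d c' hc'
          then ρ x (((c Ia : ℕ) : ℂ) • PsiAvg n d V ρ c' v) else 0)
      = (Nat.factorial d : ℂ)⁻¹ • (((c Ia : ℕ) : ℂ) • S)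
    congr 1
    calc (∑ x : Equiv.Perm (Fin d), if w ∘ ⇑x = wordOf n d c' hc'
            then ρ x (((c Ia : ℕ) : ℂ) • PsiAvg n d V ρ c' v) else 0)
        = ∑ x : Equiv.Perm (Fin d), ((c Ia : ℕ) : ℂ) •
            ((Nat.card (youngC n d c') : ℂ)⁻¹ • (if w ∘ ⇑x = wordOf n d c' hc'
              then (∑ σ : Equiv.Perm (Fin d), if σ ∈ youngC n d c' then ρ (x * σ) v else 0)
              else 0)) := by
          refine Finset.sum_congr rfl fun x _ => ?_
          rw [hρx x, hite, hite]
      _ = ((c Ia : ℕ) : ℂ) • ((Nat.card (youngC n d c') : ℂ)⁻¹ •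
            ∑ x : Equiv.Perm (Fin d), (if w ∘ ⇑x = wordOf n d c' hc'
              then (∑ σ : Equiv.Perm (Fin d), if σ ∈ youngC n d c' then ρ (x * σ) v else 0)
              else 0)) := by
          rw [← Finset.smul_sum, ← Finset.smul_sum]
      _ = ((c Ia : ℕ) : ℂ) • S := by
          rw [hB, ← Nat.cast_smul_eq_nsmul ℂ, inv_smul_smul₀ hN]
  rw [hLHS, hRHS]

/-- Under the identification `⊕_{d̲} V^{S_{d̲}} ≅ (V ⊗ E^{⊗d})^{S_d}`, the
Chevalley generator `F_a` acts on the summand `V^{S_{d̲}}` (when `d_a ≥ 1`) as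
`d_a · Ψ'`, where `Ψ' : V^{S_{d̲}} → V^{S_{f̃_a d̲}}` is the symmetrization operator. -/
theorem chevalley_F_is_symmetrization
    (a : ℕ) (ha : a + 1 < n)
    (c : Fin n → ℕ) (hc : ∑ i, c i = d) (h1 : 1 ≤ c ⟨a, by omega⟩)
    (c' : Fin n → ℕ)
    (hc'def : c' = Function.update
        (Function.update c ⟨a, by omega⟩ (c ⟨a, by omega⟩ - 1)) ⟨a + 1, ha⟩
        (c ⟨a + 1, ha⟩ + 1))
    (hc' : ∑ i, c' i = d)
    (v : V) (hv : ∀ σ ∈ youngC n d c, ρ σ v = v) :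
    chevFV n d V ⟨a, by omega⟩ ⟨a + 1, ha⟩ (phiFun n d V ρ c hc v) =
      phiFun n d V ρ c' hc'
        (((c ⟨a, by omega⟩ : ℕ) : ℂ) • PsiAvg n d V ρ c' v) := by
  exact main_aux n d V ρ a ha _ _ rfl rfl c hc h1 c' hc'def hc' v hv

end
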